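/- Let (U₁(t))_{t∈ℝ} and (U₂(t))_{t∈ℝ} be strongly continuous unitary one-parameter groups on a complex Hilbert space 𝓗. Let Φ(t) (t ≥ 1) be a family of bounded self-adjoint operators with sup_{t≥1} ‖Φ(t)‖ < ∞, and let B_{1i}(t), B_{2i}(t) (i = 1,…,n) be families of bounded operators with t ↦ B_{1i}(t)ψ and t ↦ B_{2i}(t)ψ continuous for every ψ. Let 𝒟₁ ⊆ 𝓗 be a dense subspace. Assume: (a) for every ψ₁ ∈ 𝒟₁ and ψ₂ ∈ 𝓗 the function t ↦ ⟨U₂(t)ψ₂, Φ(t)U₁(t)ψ₁⟩ is differentiable on [1,∞) with |derivative| ≤ Σ_{i=1}^n ‖B_{2i}(t)U₂(t)ψ₂‖·‖B_{1i}(t)U₁(t)ψ₁‖ at each t ≥ 1; (b) ∫₁^∞ ‖B_{2i}(t)U₂(t)φ‖² dt ≤ ‖φ‖² for all φ ∈ 𝓗 and all i; (c) there is C > 0 with ∫₁^∞ ‖B_{1i}(t)U₁(t)φ‖² dt ≤ C‖φ‖² for all φ ∈ 𝒟₁ and all i. Then the strong limit s-lim_{t→∞} U₂(t)⁻¹ Φ(t)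 U₁(t) exists, i.e. U₂(t)*Φ(t)U₁(t)ψ converges in norm as t → ∞ for every ψ ∈ 𝓗. -/

import Mathlib

open scoped InnerProductSpace ENNReal
open MeasureTheory Filter

lemma aux_sqrt_ennreal {x : ℝ} (hx : 0 ≤ x) :
    (ENNReal.ofReal (x ^ 2)) ^ (1/2 : ℝ) = ENNReal.ofReal x := by
  have h2 : (x ^ 2 : ℝ) ^ (1/2 : ℝ) = x := by
    rw [← Real.rpow_natCast x 2, ← Real.rpow_mul hx]
    norm_num
  rw [ENNReal.ofReal_rpow_of_nonneg (by positivity) (by norm_num), h2]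

lemma aux_rpow_two (y : ℝ≥0∞) : y ^ (2:ℝ) = y ^ (2:ℕ) := by
  rw [show ((2:ℝ)) = ((2:ℕ):ℝ) by norm_num, ENNReal.rpow_natCast]

lemma aux_ofReal_sq {x : ℝ} (hx : 0 ≤ x) :
    ENNReal.ofReal x ^ (2:ℝ) = ENNReal.ofReal (x ^ 2) := by
  rw [aux_rpow_two, ← ENNReal.ofReal_pow hx]


lemma aux_strong_cont {H : Type*} [NormedAddCommGroup H] [NormedSpace ℂ H] [CompleteSpace H]
    {A : ℝ → H →L[ℂ] H} {x : ℝ → H} {a b : ℝ}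
    (hA : ∀ ψ : H, ContinuousOn (fun t => A t ψ) (Set.Icc a b))
    (hx : ContinuousOn x (Set.Icc a b)) :
    ContinuousOn (fun t => A t (x t)) (Set.Icc a b) := by
  obtain ⟨C', hC'⟩ : ∃ C' : ℝ, ∀ t ∈ Set.Icc a b, ‖A t‖ ≤ C' := by
    obtain ⟨C', hC'⟩ := banach_steinhaus (g := fun i : Set.Icc a b => A i) (fun ψ => by
      obtain ⟨Cψ, hCψ⟩ := isCompact_Icc.exists_bound_of_continuousOn (hA ψ)
      exact ⟨Cψ, fun i => hCψ i i.2⟩)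
    exact ⟨C', fun t ht => hC' ⟨t, ht⟩⟩
  intro t₀ ht₀
  rw [ContinuousWithinAt, tendsto_iff_dist_tendsto_zero]
  have hx0 : Tendsto (fun t => ‖x t - x t₀‖) (nhdsWithin t₀ (Set.Icc a b)) (nhds 0) := by
    have := tendsto_iff_norm_sub_tendsto_zero.mp (hx t₀ ht₀)
    exact this
  have hA0 : Tendsto (fun t => ‖A t (x t₀) - A t₀ (x t₀)‖) (nhdsWithin t₀ (Set.Icc a b)) (nhds 0) :=
    tendsto_iff_norm_sub_tendsto_zero.mp (hA (x t₀) t₀ ht₀)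
  have hsum : Tendsto (fun t => C' * ‖x t - x t₀‖ + ‖A t (x t₀) - A t₀ (x t₀)‖)
      (nhdsWithin t₀ (Set.Icc a b)) (nhds 0) := by
    have := (hx0.const_mul C').add hA0
    simpa using this
  refine squeeze_zero' (Filter.eventually_of_mem self_mem_nhdsWithin fun t ht => dist_nonneg)
    (Filter.eventually_of_mem self_mem_nhdsWithin fun t ht => ?_) hsum
  calc dist (A t (x t)) (A t₀ (x t₀))
      ≤ dist (A t (x t)) (A t (x t₀)) + dist (A t (x t₀)) (A t₀ (x t₀)) := dist_triangle _ _ _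
    _ ≤ C' * ‖x t - x t₀‖ + ‖A t (x t₀) - A t₀ (x t₀)‖ := by
        gcongr
        · rw [dist_eq_norm, ← map_sub]
          calc ‖A t (x t - x t₀)‖ ≤ ‖A t‖ * ‖x t - x t₀‖ := (A t).le_opNorm _
            _ ≤ C' * ‖x t - x t₀‖ := by
                exact mul_le_mul_of_nonneg_right (hC' t ht) (norm_nonneg _)
        · rw [dist_eq_norm]

lemma aux_ftc {g : ℝ → ℂ} {φ : ℝ → ℝ} {a b : ℝ} (h1a : (1:ℝ) ≤ a) (hab : a ≤ b)
    (hg : ∀ t ∈ Set.Icc a b, ∃ d : ℂ, HasDerivWithinAt g d (Set.Ici 1) t ∧ ‖d‖ ≤ φ t)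
    (hφ : ContinuousOn φ (Set.Icc a b)) :
    ‖g b - g a‖ ≤ ∫ t in a..b, φ t := by
  have hIcc1 : Set.Icc a b ⊆ Set.Ici (1:ℝ) := fun y hy => le_trans h1a hy.1
  classical
  set d' : ℝ → ℂ := fun t => if h : t ∈ Set.Icc a b then (hg t h).choose else 0 with hd'
  have hφint : IntervalIntegrable φ MeasureTheory.volume a b :=
    ContinuousOn.intervalIntegrable (by rwa [Set.uIcc_of_le hab])
  have hgc : ContinuousOn g (Set.Icc a b) := fun t ht =>
    ((hg t ht).choose_spec.1.continuousWithinAt).mono hIcc1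
  have hf : ContinuousOn (fun t => g t - g a) (Set.Icc a b) := hgc.sub continuousOn_const
  have hf' : ∀ t ∈ Set.Ico a b, HasDerivWithinAt (fun t => g t - g a) (d' t) (Set.Ici t) t := by
    intro t ht
    have ht' : t ∈ Set.Icc a b := ⟨ht.1, ht.2.le⟩
    have h2 := ((hg t ht').choose_spec.1.mono (Set.Ici_subset_Ici.mpr (le_trans h1a ht.1))).sub_const (g a)
    have : d' t = (hg t ht').choose := by rw [hd']; exact dif_pos ht'
    rw [this]; exact h2
  have hBc : ContinuousOn (fun u => ∫ t in a..u, φ t) (Set.Icc a b) := by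
    have := intervalIntegral.continuousOn_primitive_interval
      (μ := MeasureTheory.volume) (f := φ) (a := a) (b := b) ?_
    · rwa [Set.uIcc_of_le hab] at this
    · rw [Set.uIcc_of_le hab]
      exact (hφ.integrableOn_Icc)
  have hB' : ∀ u ∈ Set.Ico a b, HasDerivWithinAt (fun u => ∫ t in a..u, φ t) (φ u) (Set.Ici u) u := by
    intro u hu
    have hmem : Set.Icc a b ∈ nhdsWithin u (Set.Ioi u) := by
      refine mem_nhdsWithin.mpr ⟨Set.Iio b, isOpen_Iio, hu.2, ?_⟩
      rintro y ⟨hy1, hy2⟩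
      exact ⟨le_trans hu.1 hy2.le, le_of_lt hy1⟩
    refine intervalIntegral.integral_hasDerivWithinAt_right (t := Set.Ioi u) ?_ ⟨Set.Icc a b, hmem,
      hφ.aestronglyMeasurable measurableSet_Icc⟩
      ((hφ u ⟨hu.1, hu.2.le⟩).mono_of_mem_nhdsWithin hmem)
    exact hφint.mono_set (by
      rw [Set.uIcc_of_le hab, Set.uIcc_of_le hu.1]
      exact Set.Icc_subset_Icc_right hu.2.le)
  have key := image_norm_le_of_norm_deriv_right_le_deriv_boundary' hf hf'
    (by simp) hBc hB' (fun t ht => by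
      have ht' : t ∈ Set.Icc a b := ⟨ht.1, ht.2.le⟩
      have : d' t = (hg t ht').choose := by rw [hd']; exact dif_pos ht'
      rw [this]; exact (hg t ht').choose_spec.2)
  simpa using key (Set.right_mem_Icc.mpr hab)

/-- **Lemma A.2 (Kato's version of Cook's method).** Let `(U₁(t))`, `(U₂(t))` be strongly
continuous unitary one-parameter groups, `Φ(t)` (for `t ≥ 1`) a uniformly bounded family
of bounded self-adjoint operators, `B_{1i}(t), B_{2i}(t)` strongly continuous families of
bounded operators and `𝒟₁ ⊆ 𝓗` a dense subspace. Assume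
(a) for `ψ₁ ∈ 𝒟₁`, `ψ₂ ∈ 𝓗`, the function `t ↦ ⟨U₂(t)ψ₂, Φ(t)U₁(t)ψ₁⟩` is differentiable
on `[1,∞)` with `|derivative| ≤ Σᵢ ‖B_{2i}(t)U₂(t)ψ₂‖ ‖B_{1i}(t)U₁(t)ψ₁‖`;
(b) `∫₁^∞ ‖B_{2i}(t)U₂(t)φ‖² dt ≤ ‖φ‖²` for all `φ ∈ 𝓗`;
(c) `∫₁^∞ ‖B_{1i}(t)U₁(t)φ‖² dt ≤ C‖φ‖²` for all `φ ∈ 𝒟₁`.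
Then the strong limit `s-lim_{t→∞} U₂(t)* Φ(t) U₁(t)` exists. -/
theorem stmt_3 {H : Type*} [NormedAddCommGroup H] [InnerProductSpace ℂ H] [CompleteSpace H]
    (U₁ U₂ : ℝ → H →L[ℂ] H)
    (hU₁0 : U₁ 0 = 1) (hU₁add : ∀ s t : ℝ, U₁ (s + t) = (U₁ s).comp (U₁ t))
    (hU₁iso : ∀ (t : ℝ) (ψ : H), ‖U₁ t ψ‖ = ‖ψ‖)
    (hU₁cont : ∀ ψ : H, Continuous fun t => U₁ t ψ)
    (hU₂0 : U₂ 0 = 1) (hU₂add : ∀ s t : ℝ, U₂ (s + t) = (U₂ s).comp (U₂ t))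
    (hU₂iso : ∀ (t : ℝ) (ψ : H), ‖U₂ t ψ‖ = ‖ψ‖)
    (hU₂cont : ∀ ψ : H, Continuous fun t => U₂ t ψ)
    (n : ℕ) (Φ : ℝ → H →L[ℂ] H) (B₁ B₂ : Fin n → ℝ → H →L[ℂ] H)
    (hΦsa : ∀ t : ℝ, 1 ≤ t → IsSelfAdjoint (Φ t))
    (hΦbdd : ∃ M : ℝ, ∀ t : ℝ, 1 ≤ t → ‖Φ t‖ ≤ M)
    (hB₁cont : ∀ (i : Fin n) (ψ : H), ContinuousOn (fun t => B₁ i t ψ) (Set.Ici 1))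
    (hB₂cont : ∀ (i : Fin n) (ψ : H), ContinuousOn (fun t => B₂ i t ψ) (Set.Ici 1))
    (D₁ : Submodule ℂ H) (hD₁ : Dense (D₁ : Set H))
    (hderiv : ∀ ψ₁ ∈ D₁, ∀ (ψ₂ : H) (t : ℝ), 1 ≤ t → ∃ d : ℂ,
      HasDerivWithinAt (fun s : ℝ => ⟪U₂ s ψ₂, Φ s (U₁ s ψ₁)⟫_ℂ) d (Set.Ici 1) t ∧
        ‖d‖ ≤ ∑ i : Fin n, ‖B₂ i t (U₂ t ψ₂)‖ * ‖B₁ i t (U₁ t ψ₁)‖)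
    (hint₂ : ∀ (i : Fin n) (φ : H),
      ∫⁻ t in Set.Ioi (1 : ℝ), ENNReal.ofReal (‖B₂ i t (U₂ t φ)‖ ^ 2) ≤
        ENNReal.ofReal (‖φ‖ ^ 2))
    (C : ℝ) (hC : 0 < C)
    (hint₁ : ∀ (i : Fin n), ∀ φ ∈ D₁,
      ∫⁻ t in Set.Ioi (1 : ℝ), ENNReal.ofReal (‖B₁ i t (U₁ t φ)‖ ^ 2) ≤
        ENNReal.ofReal (C * ‖φ‖ ^ 2)) :
    ∀ ψ : H, ∃ w : H,
      Filter.Tendsto (fun t => ContinuousLinearMap.adjoint (U₂ t) (Φ t (U₁ t ψ)))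
        Filter.atTop (nhds w) := by
  obtain ⟨M₀, hM₀⟩ := hΦbdd
  set M : ℝ := max M₀ 0 with hMdef
  have hM0 : (0:ℝ) ≤ M := le_max_right _ _
  have hM : ∀ t : ℝ, 1 ≤ t → ‖Φ t‖ ≤ M := fun t ht => (hM₀ t ht).trans (le_max_left _ _)
  set F : ℝ → H → H := fun t x => ContinuousLinearMap.adjoint (U₂ t) (Φ t (U₁ t x)) with hF
  have hFnorm : ∀ t : ℝ, 1 ≤ t → ∀ x : H, ‖F t x‖ ≤ M * ‖x‖ := by
    intro t ht x
    have h2 : ‖ContinuousLinearMap.adjoint (U₂ t)‖ = ‖U₂ t‖ :=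
      ContinuousLinearMap.adjoint.norm_map (U₂ t)
    have h3 : ‖U₂ t‖ ≤ 1 :=
      ContinuousLinearMap.opNorm_le_bound _ zero_le_one (fun y => by rw [hU₂iso]; simp)
    calc ‖F t x‖ ≤ ‖ContinuousLinearMap.adjoint (U₂ t)‖ * ‖Φ t (U₁ t x)‖ :=
          (ContinuousLinearMap.adjoint (U₂ t)).le_opNorm _
      _ ≤ 1 * ‖Φ t (U₁ t x)‖ := by
          apply mul_le_mul_of_nonneg_right _ (norm_nonneg _)
          rw [h2]; exact h3
      _ = ‖Φ t (U₁ t x)‖ := one_mul _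
      _ ≤ ‖Φ t‖ * ‖U₁ t x‖ := (Φ t).le_opNorm _
      _ ≤ M * ‖x‖ := by
          rw [hU₁iso]
          exact mul_le_mul_of_nonneg_right (hM t ht) (norm_nonneg _)
  -- main Cauchy estimate on D₁
  have hmain : ∀ ψ₁ ∈ D₁, ∀ ε : ℝ, 0 < ε → ∃ T : ℝ, 1 ≤ T ∧ ∀ s b : ℝ, T ≤ s → s ≤ b →
      ‖F b ψ₁ - F s ψ₁‖ ≤ ε := by
    intro ψ₁ hψ₁ ε hε
    set q : Fin n → ℝ → ℝ := fun i t => ‖B₁ i t (U₁ t ψ₁)‖ with hq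
    set ν : Fin n → Measure ℝ := fun i =>
      (volume.restrict (Set.Ioi (1:ℝ))).withDensity (fun t => ENNReal.ofReal (q i t ^ 2)) with hν
    set δ : ℝ := ε / (n + 1) with hδ
    have hδpos : 0 < δ := div_pos hε (by positivity)
    have htail : ∃ T : ℝ, 1 ≤ T ∧ ∀ i, ν i (Set.Ioi T) < ENNReal.ofReal (δ ^ 2) := by
      have hfin : ∀ i, ν i Set.univ ≠ ⊤ := by
        intro i
        have : ν i Set.univ = ∫⁻ t in Set.Ioi (1:ℝ), ENNReal.ofReal (q i t ^ 2) := by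
          rw [hν, withDensity_apply _ MeasurableSet.univ, Measure.restrict_univ]
        rw [this]
        exact ne_top_of_le_ne_top ENNReal.ofReal_ne_top (hint₁ i ψ₁ hψ₁)
      have hempty : ⋂ k : ℕ, Set.Ioi ((k:ℝ)) = ∅ := by
        ext x
        simp only [Set.mem_iInter, Set.mem_Ioi, Set.mem_empty_iff_false, iff_false]
        push_neg
        obtain ⟨k, hk⟩ := exists_nat_gt x
        exact ⟨k, hk.le⟩
      have htend : ∀ i : Fin n, Tendsto (fun k : ℕ => ν i (Set.Ioi (k:ℝ))) atTop (nhds 0) := by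
        intro i
        have := tendsto_measure_iInter_atTop (μ := ν i) (s := fun k : ℕ => Set.Ioi ((k:ℝ)))
          (fun k => measurableSet_Ioi.nullMeasurableSet)
          (fun k l hkl => Set.Ioi_subset_Ioi (by exact_mod_cast hkl))
          ⟨0, ne_top_of_le_ne_top (hfin i) (measure_mono (Set.subset_univ _))⟩
        rw [hempty] at this
        simpa [Function.comp_def] using this
      have hev : ∀ᶠ k : ℕ in atTop, ∀ i : Fin n, ν i (Set.Ioi (k:ℝ)) < ENNReal.ofReal (δ ^ 2) := by
        rw [Filter.eventually_all]
        intro i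
        exact (tendsto_order.1 (htend i)).2 _ (ENNReal.ofReal_pos.mpr (by positivity))
      obtain ⟨k, hk⟩ := hev.exists
      refine ⟨max (k:ℝ) 1, le_max_right _ _, fun i => lt_of_le_of_lt ?_ (hk i)⟩
      exact measure_mono (Set.Ioi_subset_Ioi (le_max_left _ _))
    obtain ⟨T, hT1, hTtail⟩ := htail
    refine ⟨T, hT1, fun s b hTs hsb => ?_⟩
    have h1s : (1:ℝ) ≤ s := le_trans hT1 hTs
    set v : H := F b ψ₁ - F s ψ₁ with hv
    set p : Fin n → ℝ → ℝ := fun i t => ‖B₂ i t (U₂ t v)‖ with hp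
    have hsubIci : Set.Icc s b ⊆ Set.Ici (1:ℝ) := fun y hy => le_trans h1s hy.1
    have hpc : ∀ i, ContinuousOn (p i) (Set.Icc s b) := fun i =>
      (aux_strong_cont (fun ψ => (hB₂cont i ψ).mono hsubIci) ((hU₂cont v).continuousOn)).norm
    have hqc : ∀ i, ContinuousOn (q i) (Set.Icc s b) := fun i =>
      (aux_strong_cont (fun ψ => (hB₁cont i ψ).mono hsubIci) ((hU₁cont ψ₁).continuousOn)).norm
    set φf : ℝ → ℝ := fun t => ∑ i : Fin n, p i t * q i t with hφf
    have hφc : ContinuousOn φf (Set.Icc s b) :=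
      continuousOn_finset_sum _ (fun i _ => (hpc i).mul (hqc i))
    set G : ℝ → ℂ := fun r => ⟪U₂ r v, Φ r (U₁ r ψ₁)⟫_ℂ with hG
    have hgd : ∀ t ∈ Set.Icc s b, ∃ d : ℂ,
        HasDerivWithinAt G d (Set.Ici 1) t ∧ ‖d‖ ≤ φf t :=
      fun t ht => hderiv ψ₁ hψ₁ v t (hsubIci ht)
    have hkey : ‖v‖ ^ 2 ≤ ∫ t in s..b, φf t := by
      have hGdiff : G b - G s = ⟪v, v⟫_ℂ := by
        have hb' : G b = ⟪v, F b ψ₁⟫_ℂ :=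
          (ContinuousLinearMap.adjoint_inner_right (U₂ b) v (Φ b (U₁ b ψ₁))).symm
        have hs' : G s = ⟪v, F s ψ₁⟫_ℂ :=
          (ContinuousLinearMap.adjoint_inner_right (U₂ s) v (Φ s (U₁ s ψ₁))).symm
        rw [hb', hs', ← inner_sub_right, ← hv]
      have hnorm : ‖G b - G s‖ = ‖v‖ ^ 2 := by
        rw [hGdiff, inner_self_eq_norm_sq_to_K]
        simp [Complex.norm_real]
      rw [← hnorm]
      exact aux_ftc h1s hsb hgd hφc
    have hintOK : ∀ i : Fin n, IntervalIntegrable (fun t => p i t * q i t) volume s b :=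
      fun i => ContinuousOn.intervalIntegrable
        (by rw [Set.uIcc_of_le hsb]; exact (hpc i).mul (hqc i))
    have hsplit : ∫ t in s..b, φf t = ∑ i : Fin n, ∫ t in s..b, p i t * q i t :=
      intervalIntegral.integral_finset_sum (fun i _ => hintOK i)
    have hIoc1 : Set.Ioc s b ⊆ Set.Ioi (1:ℝ) := fun y hy => lt_of_le_of_lt h1s hy.1
    have hperi : ∀ i : Fin n, ∫ t in s..b, p i t * q i t ≤ ‖v‖ * δ := by
      intro i
      have hmp : AEMeasurable (fun t => ENNReal.ofReal (p i t))
          (volume.restrict (Set.Ioc s b)) :=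
        ENNReal.measurable_ofReal.comp_aemeasurable
          ((((hpc i).mono Set.Ioc_subset_Icc_self).aestronglyMeasurable
            measurableSet_Ioc).aemeasurable)
      have hmq : AEMeasurable (fun t => ENNReal.ofReal (q i t))
          (volume.restrict (Set.Ioc s b)) :=
        ENNReal.measurable_ofReal.comp_aemeasurable
          ((((hqc i).mono Set.Ioc_subset_Icc_self).aestronglyMeasurable
            measurableSet_Ioc).aemeasurable)
      have hstep1 : ∫ t in s..b, p i t * q i t
          = (∫⁻ t in Set.Ioc s b, ENNReal.ofReal (p i t) * ENNReal.ofReal (q i t)).toReal := by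
        rw [intervalIntegral.integral_of_le hsb,
          integral_eq_lintegral_of_nonneg_ae
            (Filter.Eventually.of_forall fun t => mul_nonneg (norm_nonneg _) (norm_nonneg _))
            ((((hpc i).mul (hqc i)).mono Set.Ioc_subset_Icc_self).aestronglyMeasurable
              measurableSet_Ioc)]
        congr 1
        exact lintegral_congr fun t => ENNReal.ofReal_mul (norm_nonneg _)
      have hfact1 : (∫⁻ t in Set.Ioc s b, ENNReal.ofReal (p i t) ^ (2:ℝ))
          ≤ ENNReal.ofReal (‖v‖ ^ 2) := by
        calc (∫⁻ t in Set.Ioc s b, ENNReal.ofReal (p i t) ^ (2:ℝ))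
            = ∫⁻ t in Set.Ioc s b, ENNReal.ofReal (p i t ^ 2) :=
              lintegral_congr fun t => aux_ofReal_sq (norm_nonneg _)
          _ ≤ ∫⁻ t in Set.Ioi (1:ℝ), ENNReal.ofReal (p i t ^ 2) := lintegral_mono_set hIoc1
          _ ≤ ENNReal.ofReal (‖v‖ ^ 2) := hint₂ i v
      have hfact2 : (∫⁻ t in Set.Ioc s b, ENNReal.ofReal (q i t) ^ (2:ℝ))
          ≤ ENNReal.ofReal (δ ^ 2) := by
        have hνeq : ν i (Set.Ioc s b)
            = ∫⁻ t in Set.Ioc s b, ENNReal.ofReal (q i t ^ 2) := by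
          rw [hν, withDensity_apply _ measurableSet_Ioc,
            Measure.restrict_restrict measurableSet_Ioc,
            Set.inter_eq_left.mpr hIoc1]
        calc (∫⁻ t in Set.Ioc s b, ENNReal.ofReal (q i t) ^ (2:ℝ))
            = ∫⁻ t in Set.Ioc s b, ENNReal.ofReal (q i t ^ 2) :=
              lintegral_congr fun t => aux_ofReal_sq (norm_nonneg _)
          _ = ν i (Set.Ioc s b) := hνeq.symm
          _ ≤ ν i (Set.Ioi T) := measure_mono (fun y hy => lt_of_le_of_lt hTs hy.1)
          _ ≤ ENNReal.ofReal (δ ^ 2) := (hTtail i).le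
      have hcomb : (∫⁻ t in Set.Ioc s b, ENNReal.ofReal (p i t) * ENNReal.ofReal (q i t))
          ≤ ENNReal.ofReal (‖v‖ * δ) := by
        calc (∫⁻ t in Set.Ioc s b, ENNReal.ofReal (p i t) * ENNReal.ofReal (q i t))
            ≤ (∫⁻ t in Set.Ioc s b, ENNReal.ofReal (p i t) ^ (2:ℝ)) ^ (1/2:ℝ)
              * (∫⁻ t in Set.Ioc s b, ENNReal.ofReal (q i t) ^ (2:ℝ)) ^ (1/2:ℝ) := by
              simpa using ENNReal.lintegral_mul_le_Lp_mul_Lq (volume.restrict (Set.Ioc s b))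
                (Real.holderConjugate_iff.mpr ⟨one_lt_two, by norm_num⟩ : Real.HolderConjugate 2 2) hmp hmq
          _ ≤ (ENNReal.ofReal (‖v‖ ^ 2)) ^ (1/2:ℝ) * (ENNReal.ofReal (δ ^ 2)) ^ (1/2:ℝ) := by
              gcongr
          _ = ENNReal.ofReal ‖v‖ * ENNReal.ofReal δ := by
              rw [aux_sqrt_ennreal (norm_nonneg _), aux_sqrt_ennreal hδpos.le]
          _ = ENNReal.ofReal (‖v‖ * δ) := (ENNReal.ofReal_mul (norm_nonneg _)).symm
      calc ∫ t in s..b, p i t * q i t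
          = (∫⁻ t in Set.Ioc s b, ENNReal.ofReal (p i t) * ENNReal.ofReal (q i t)).toReal :=
            hstep1
        _ ≤ (ENNReal.ofReal (‖v‖ * δ)).toReal :=
            ENNReal.toReal_mono ENNReal.ofReal_ne_top hcomb
        _ = ‖v‖ * δ := ENNReal.toReal_ofReal (mul_nonneg (norm_nonneg _) hδpos.le)
    have hndelta : (n:ℝ) * δ ≤ ε := by
      calc (n:ℝ) * δ ≤ ((n:ℝ) + 1) * δ := by
            apply mul_le_mul_of_nonneg_right _ hδpos.le
            linarith
        _ = ε := by
            rw [hδ, mul_comm]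
            exact div_mul_cancel₀ ε (by positivity)
    have hsum : ‖v‖ ^ 2 ≤ ‖v‖ * ε := by
      calc ‖v‖ ^ 2 ≤ ∫ t in s..b, φf t := hkey
        _ = ∑ i : Fin n, ∫ t in s..b, p i t * q i t := hsplit
        _ ≤ ∑ _i : Fin n, ‖v‖ * δ := Finset.sum_le_sum fun i _ => hperi i
        _ = (n:ℝ) * (‖v‖ * δ) := by simp [Finset.sum_const, Finset.card_univ, mul_comm]
        _ = ‖v‖ * ((n:ℝ) * δ) := by ring
        _ ≤ ‖v‖ * ε := mul_le_mul_of_nonneg_left hndelta (norm_nonneg _)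
    rcases eq_or_lt_of_le (norm_nonneg v) with h0 | h0
    · rw [← h0]; exact hε.le
    · rw [pow_two] at hsum
      exact (mul_le_mul_iff_right₀ h0).mp hsum
  -- assembly
  intro ψ
  have hcauchy : CauchySeq (fun t : ℝ => F t ψ) := by
    rw [Metric.cauchySeq_iff']
    intro ε hε
    have hM1 : (0:ℝ) < M + 1 := by linarith
    obtain ⟨ψ₁', hψ₁mem, hψ₁close⟩ : ∃ y ∈ (D₁ : Set H), dist ψ y < ε / (3 * (M + 1)) := by
      exact Metric.mem_closure_iff.mp (hD₁ ψ) _ (by positivity)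
    obtain ⟨T, hT1, hT⟩ := hmain ψ₁' hψ₁mem (ε/3) (by positivity)
    refine ⟨T, fun t ht => ?_⟩
    have hbound : ∀ r : ℝ, 1 ≤ r → ‖F r ψ - F r ψ₁'‖ < ε/3 := by
      intro r hr
      have heq : F r ψ - F r ψ₁' = F r (ψ - ψ₁') := by
        simp only [hF, map_sub]
      rw [heq]
      calc ‖F r (ψ - ψ₁')‖ ≤ M * ‖ψ - ψ₁'‖ := hFnorm r hr _
        _ ≤ (M + 1) * ‖ψ - ψ₁'‖ := mul_le_mul_of_nonneg_right (by linarith) (norm_nonneg _)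
        _ < (M + 1) * (ε / (3 * (M + 1))) := by
            apply mul_lt_mul_of_pos_left _ hM1
            rw [← dist_eq_norm]; exact hψ₁close
        _ = ε/3 := by field_simp
    have A1 : dist (F t ψ) (F t ψ₁') < ε/3 := by
      rw [dist_eq_norm]; exact hbound t (le_trans hT1 ht)
    have A2 : dist (F t ψ₁') (F T ψ₁') ≤ ε/3 := by
      rw [dist_eq_norm]; exact hT T t le_rfl ht
    have A3 : dist (F T ψ₁') (F T ψ) < ε/3 := by
      rw [dist_comm, dist_eq_norm]; exact hbound T hT1
    have := dist_triangle4 (F t ψ) (F t ψ₁') (F T ψ₁') (F T ψ)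
    linarith
  obtain ⟨w, hw⟩ := cauchySeq_tendsto_of_complete hcauchy
  exact ⟨w, hw⟩
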